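/- Let ξ_1,…,ξ_n be i.i.d. Bernoulli(p) with 0 < p < 1 and fix 2 ≤ r ≤ n. With A₂ = ⋃_{s|n, s ≤ n/r, 1 ≤ a ≤ s} {ξ_i = 1 for all i ∈ C_{a,s}}, one has P(A₂) ≤ n·p^r/(q·r), where q = 1−p. -/

import Mathlib

open MeasureTheory ProbabilityTheory

/-- Residue of `x` mod `n` taken in `{1,…,n}`. -/
def amod (x n : ℕ) : ℕ := if x % n = 0 then n else x % n

/-- The cycle `C_{a,s} = {a, a+s mod n, …, a+(n/gcd(s,n)−1)s mod n}`. -/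
def cyc (n a s : ℕ) : Finset ℕ :=
  (Finset.range (n / Nat.gcd s n)).image fun k => amod (a + k * s) n

lemma amod_eq {x n : ℕ} (h1 : 1 ≤ x) (h2 : x ≤ n) : amod x n = x := by
  unfold amod
  rcases eq_or_lt_of_le h2 with rfl | h
  · simp [Nat.mod_self]
  · rw [Nat.mod_eq_of_lt h, if_neg (by omega)]

lemma cyc_card {n s a : ℕ} (hs : s ∣ n) (hn : 0 < n) (ha1 : 1 ≤ a) (has : a ≤ s) :
    (cyc n a s).card = n / s := by
  have hs0 : 0 < s := le_trans ha1 has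
  rw [cyc, Nat.gcd_eq_left hs, Finset.card_image_of_injOn, Finset.card_range]
  intro k hk l hl hkl
  simp only [Finset.mem_coe, Finset.mem_range] at hk hl
  have key : ∀ m, m < n/s → amod (a + m*s) n = a + m*s := by
    intro m hm
    apply amod_eq (by omega)
    have h2 : (n/s)*s = n := Nat.div_mul_cancel hs
    have h1 : m*s + s ≤ n := by
      calc m*s + s = (m+1)*s := by ring
        _ ≤ (n/s)*s := Nat.mul_le_mul_right s (by omega)
        _ = n := h2
    omega
  dsimp only at hkl
  rw [key k hk, key l hl] at hkl
  exact Nat.eq_of_mul_eq_mul_right hs0 (by omega : k*s = l*s)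

lemma meas_all {Ω : Type*} [MeasurableSpace Ω] (μ : Measure Ω) (p : ℝ)
    (ξ : ℕ → Ω → Bool)
    (hindep : iIndepFun ξ μ)
    (hbern : ∀ i, μ {ω | ξ i ω = true} = ENNReal.ofReal p) (T : Finset ℕ) :
    μ {ω | ∀ i ∈ T, ξ i ω = true} = ENNReal.ofReal p ^ T.card := by
  have hset : {ω | ∀ i ∈ T, ξ i ω = true} = ⋂ i ∈ T, ξ i ⁻¹' {true} := by
    ext ω; simp
  rw [hset, hindep.meas_biInter (S := T) (s := fun i => ξ i ⁻¹' {true})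
      (fun i _ => ⟨{true}, trivial, rfl⟩)]
  have : ∀ i, ξ i ⁻¹' {true} = {ω | ξ i ω = true} := by intro i; ext ω; simp
  simp_rw [this, hbern]
  rw [Finset.prod_const]

/-- For i.i.d. Bernoulli(p) variables and `2 ≤ r ≤ n`, the event
`A₂ = ⋃_{s ∣ n, s ≤ n/r, 1 ≤ a ≤ s} {ξ_i = 1 ∀ i ∈ C_{a,s}}` satisfies
`P(A₂) ≤ n pʳ/(q r)` where `q = 1 − p`. -/
theorem stmt12 {Ω : Type*} [MeasurableSpace Ω] (μ : Measure Ω) [IsProbabilityMeasure μ]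
    (p : ℝ) (hp0 : 0 < p) (hp1 : p < 1) (n r : ℕ) (hr : 2 ≤ r) (hrn : r ≤ n)
    (ξ : ℕ → Ω → Bool) (hmeas : ∀ i, Measurable (ξ i))
    (hindep : iIndepFun ξ μ)
    (hbern : ∀ i, μ {ω | ξ i ω = true} = ENNReal.ofReal p) :
    (μ {ω | ∃ s a : ℕ, s ∣ n ∧ s * r ≤ n ∧ 1 ≤ a ∧ a ≤ s ∧
        ∀ i ∈ cyc n a s, ξ i ω = true}).toReal ≤
      (n : ℝ) * p ^ r / ((1 - p) * r) := by
  have hn : 0 < n := by omega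
  set D : Finset ℕ := n.divisors.filter (fun s => s * r ≤ n) with hD
  set S : Finset ((_ : ℕ) × ℕ) := D.sigma (fun s => Finset.Icc 1 s) with hS
  -- the event is contained in a finite union
  have hsub : {ω | ∃ s a : ℕ, s ∣ n ∧ s * r ≤ n ∧ 1 ≤ a ∧ a ≤ s ∧
      ∀ i ∈ cyc n a s, ξ i ω = true} ⊆
      ⋃ x ∈ S, {ω | ∀ i ∈ cyc n x.2 x.1, ξ i ω = true} := by
    intro ω hω
    obtain ⟨s, a, h1, h2, h3, h4, h5⟩ := hω
    refine Set.mem_biUnion (show (⟨s, a⟩ : (_ : ℕ) × ℕ) ∈ S from ?_) h5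
    simp only [hS, Finset.mem_sigma, hD, Finset.mem_filter, Nat.mem_divisors,
      Finset.mem_Icc]
    exact ⟨⟨⟨h1, hn.ne'⟩, h2⟩, h3, h4⟩
  have hbound := (measure_mono hsub).trans (measure_biUnion_finset_le (μ := μ) S _)
  -- compute each summand
  have hterm : ∀ x ∈ S, μ {ω | ∀ i ∈ cyc n x.2 x.1, ξ i ω = true}
      = ENNReal.ofReal (p ^ (n / x.1)) := by
    rintro ⟨s, a⟩ hx
    simp only [hS, Finset.mem_sigma, hD, Finset.mem_filter, Nat.mem_divisors,
      Finset.mem_Icc] at hx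
    rw [meas_all μ p ξ hindep hbern, cyc_card hx.1.1.1 hn hx.2.1 hx.2.2,
      ← ENNReal.ofReal_pow hp0.le]
  rw [Finset.sum_congr rfl hterm, ← ENNReal.ofReal_sum_of_nonneg
    (fun x _ => pow_nonneg hp0.le _)] at hbound
  -- pass to reals
  have hq : (0:ℝ) < 1 - p := by linarith
  have hr0 : (0:ℝ) < r := by positivity
  refine le_trans (ENNReal.toReal_mono ENNReal.ofReal_ne_top hbound) ?_
  rw [ENNReal.toReal_ofReal (Finset.sum_nonneg (fun x _ => pow_nonneg hp0.le _))]
  -- the real inequality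
  have hsum : ∑ x ∈ S, p ^ (n / x.1) = ∑ s ∈ D, (s : ℝ) * p ^ (n / s) := by
    rw [hS, Finset.sum_sigma]
    refine Finset.sum_congr rfl fun s hs => ?_
    dsimp only
    rw [Finset.sum_const, Nat.card_Icc, nsmul_eq_mul]
    simp
  rw [hsum]
  have step1 : ∑ s ∈ D, (s : ℝ) * p ^ (n / s) ≤ (n / r : ℝ) * ∑ s ∈ D, p ^ (n / s) := by
    rw [Finset.mul_sum]
    refine Finset.sum_le_sum fun s hs => ?_
    simp only [hD, Finset.mem_filter, Nat.mem_divisors] at hs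
    have : (s : ℝ) ≤ n / r := by
      rw [le_div_iff₀ hr0]
      exact_mod_cast hs.2
    exact mul_le_mul_of_nonneg_right this (pow_nonneg hp0.le _)
  have hinj : Set.InjOn (fun s => n / s) D := by
    intro s hsm t htm hst
    simp only [hD, Finset.coe_filter, Set.mem_setOf_eq, Nat.mem_divisors] at hsm htm
    have h1 : n / (n / s) = s := Nat.div_div_self hsm.1.1 hn.ne'
    have h2 : n / (n / t) = t := Nat.div_div_self htm.1.1 hn.ne'
    simp only at hst
    rw [← h1, ← h2, hst]
  have step2 : ∑ s ∈ D, p ^ (n / s) ≤ ∑ m ∈ Finset.Icc r n, p ^ m := by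
    rw [← Finset.sum_image (fun s hs t ht => hinj hs ht)]
    refine Finset.sum_le_sum_of_subset_of_nonneg ?_ (fun _ _ _ => pow_nonneg hp0.le _)
    intro m hm
    simp only [Finset.mem_image, hD, Finset.mem_filter, Nat.mem_divisors] at hm
    obtain ⟨s, ⟨⟨hs1, _⟩, hs2⟩, rfl⟩ := hm
    have hs0 : 0 < s := Nat.pos_of_dvd_of_pos hs1 hn
    rw [Finset.mem_Icc]
    constructor
    · rw [Nat.le_div_iff_mul_le hs0, Nat.mul_comm]; exact hs2
    · exact Nat.div_le_self n s
  have step3 : ∑ m ∈ Finset.Icc r n, p ^ m ≤ p ^ r / (1 - p) := by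
    have : Finset.Icc r n = Finset.Ico r (n + 1) := by
      rw [Finset.Ico_add_one_right_eq_Icc]
    rw [this, Finset.sum_Ico_eq_sum_range]
    simp_rw [pow_add]
    rw [← Finset.mul_sum]
    rw [div_eq_mul_one_div]
    refine mul_le_mul_of_nonneg_left ?_ (pow_nonneg hp0.le _)
    rw [le_div_iff₀ hq]
    have := geom_sum_mul p (n + 1 - r)
    nlinarith [pow_nonneg hp0.le (n + 1 - r)]
  calc ∑ s ∈ D, (s : ℝ) * p ^ (n / s)
      ≤ (n / r : ℝ) * ∑ s ∈ D, p ^ (n / s) := step1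
    _ ≤ (n / r : ℝ) * (p ^ r / (1 - p)) := by
        refine mul_le_mul_of_nonneg_left (step2.trans step3) (by positivity)
    _ = (n : ℝ) * p ^ r / ((1 - p) * r) := by field_simp
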